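/- Consider the discretized linear wave system M_ρ (de₁/dt) = -D_gradᵀ e₂ + B u∂, M_T (de₂/dt) = D_grad e₁, M∂ y∂ = Bᵀ e₁, with M_ρ, M_T, M∂ symmetric positive definite. Define Hᵈ(t) = ½ e₁ᵀ M_ρ e₁ + ½ e₂ᵀ M_T e₂. Then dHᵈ/dt = u∂ᵀ M∂ y∂. -/

import Mathlib

open Matrix

lemma quad_deriv {n : ℕ} (M : Matrix (Fin n) (Fin n) ℝ) (e e' : ℝ → Fin n → ℝ) (t : ℝ)
    (he : HasDerivAt e (e' t) t) :
    HasDerivAt (fun s => e s ⬝ᵥ M.mulVec (e s))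
      (e' t ⬝ᵥ M.mulVec (e t) + e t ⬝ᵥ M.mulVec (e' t)) t := by
  have hc : ∀ i, HasDerivAt (fun s => e s i) (e' t i) t := fun i => by
    exact ((ContinuousLinearMap.proj i : (Fin n → ℝ) →L[ℝ] ℝ).hasFDerivAt.comp_hasDerivAt t he)
  have : HasDerivAt (fun s => ∑ i, e s i * ∑ j, M i j * e s j)
      (∑ i, (e' t i * ∑ j, M i j * e t j + e t i * ∑ j, M i j * e' t j)) t := by
    apply HasDerivAt.fun_sum
    intro i _
    exact (hc i).mul (HasDerivAt.fun_sum fun j _ => (hc j).const_mul (M i j))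
  simp only [dotProduct, mulVec, Finset.sum_add_distrib] at this ⊢
  convert this using 2 <;> simp [dotProduct, mul_comm]
set_option maxHeartbeats 800000 in
theorem stmt16 {n₁ n₂ nb : ℕ}
    (Mρ : Matrix (Fin n₁) (Fin n₁) ℝ) (MT : Matrix (Fin n₂) (Fin n₂) ℝ)
    (Mb : Matrix (Fin nb) (Fin nb) ℝ)
    (hMρ : Mρ.PosDef) (hMT : MT.PosDef) (hMb : Mb.PosDef)
    (Dgrad : Matrix (Fin n₂) (Fin n₁) ℝ) (B : Matrix (Fin n₁) (Fin nb) ℝ)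
    (e₁ e₁' : ℝ → (Fin n₁ → ℝ)) (e₂ e₂' : ℝ → (Fin n₂ → ℝ))
    (ub yb : ℝ → (Fin nb → ℝ))
    (he₁ : ∀ t, HasDerivAt e₁ (e₁' t) t) (he₂ : ∀ t, HasDerivAt e₂ (e₂' t) t)
    (h1 : ∀ t, Mρ.mulVec (e₁' t) = -(Dgradᵀ.mulVec (e₂ t)) + B.mulVec (ub t))
    (h2 : ∀ t, MT.mulVec (e₂' t) = Dgrad.mulVec (e₁ t))
    (h3 : ∀ t, Mb.mulVec (yb t) = Bᵀ.mulVec (e₁ t))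
    (t : ℝ) :
    HasDerivAt
      (fun s => (1 / 2) * (e₁ s ⬝ᵥ Mρ.mulVec (e₁ s)) + (1 / 2) * (e₂ s ⬝ᵥ MT.mulVec (e₂ s)))
      (ub t ⬝ᵥ Mb.mulVec (yb t)) t := by
  have d1 := quad_deriv Mρ e₁ e₁' t (he₁ t)
  have d2 := quad_deriv MT e₂ e₂' t (he₂ t)
  have h := (d1.const_mul (1/2 : ℝ)).add (d2.const_mul (1/2 : ℝ))
  convert h using 1
  case e'_4 => rfl
  case e'_5 => rfl
  case e'_8 => rfl
  have sym1 : e₁' t ⬝ᵥ Mρ.mulVec (e₁ t) = e₁ t ⬝ᵥ Mρ.mulVec (e₁' t) := by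
    rw [dotProduct_mulVec, ← mulVec_transpose, show Mρᵀ = Mρ from (by simpa using hMρ.1 : Mρ.IsSymm).eq, dotProduct_comm]
  have sym2 : e₂' t ⬝ᵥ MT.mulVec (e₂ t) = e₂ t ⬝ᵥ MT.mulVec (e₂' t) := by
    rw [dotProduct_mulVec, ← mulVec_transpose, show MTᵀ = MT from (by simpa using hMT.1 : MT.IsSymm).eq, dotProduct_comm]
  rw [sym1, sym2, h1 t, h2 t, h3 t]
  have key : e₁ t ⬝ᵥ (-(Dgradᵀ.mulVec (e₂ t)) + B.mulVec (ub t))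
      = - (e₂ t ⬝ᵥ Dgrad.mulVec (e₁ t)) + ub t ⬝ᵥ Bᵀ.mulVec (e₁ t) := by
    rw [dotProduct_add, dotProduct_neg, dotProduct_mulVec, ← mulVec_transpose,
      transpose_transpose, dotProduct_comm, dotProduct_mulVec (e₁ t) B, ← mulVec_transpose,
      dotProduct_comm (ub t)]
  rw [key]; ring
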